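/- Let n and s be integers with s ≥ 3 and n ≥ 2s + 3, and let F be a stable 3-graph with vertex set [n] that has property U(s, 2s+1), ν(∂F) = s + 1, and ν(∂F − {1}) = s + 1 (where ∂F − {1} denotes the edges of ∂F not containing 1). Let M = { {i+1, 2s+4−i} : 1 ≤ i ≤ s+1 }. Then for any two distinct e₁, e₂ ∈ M, no 3-element subset of e₁ ∪ e₂ is an edge of F. -/

import Mathlib

open Finset

/-- `F₁ ≺ F₂`: same size, and the `i`-th smallest element of `F₁` is at most
the `i`-th smallest element of `F₂`. -/
def PrecS (A B : Finset ℕ) : Prop :=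
  A.card = B.card ∧
    ∀ i, i < A.card → (A.sort (· ≤ ·)).getD i 0 ≤ (B.sort (· ≤ ·)).getD i 0

/-- A family of subsets of `[n] = {1,…,n}` is stable (shifted). -/
def IsStable (n : ℕ) (F : Finset (Finset ℕ)) : Prop :=
  ∀ A B : Finset ℕ, A ⊆ Finset.Icc 1 n → B ∈ F → PrecS A B → A ∈ F

/-- Property `U(s, q)`: any `s` edges (repetitions allowed) have union of size at most `q`. -/
def HasU (F : Finset (Finset ℕ)) (s q : ℕ) : Prop :=
  ∀ f : Fin s → Finset ℕ, (∀ i, f i ∈ F) → (Finset.univ.biUnion f).card ≤ q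

/-- Matching number: the maximum size of a set of pairwise disjoint edges of `F`. -/
def matchNum (F : Finset (Finset ℕ)) : ℕ :=
  (F.powerset.filter fun M => ∀ a ∈ M, ∀ b ∈ M, a ≠ b → Disjoint a b).sup Finset.card

/-- Shadow of a 3-uniform family: all 2-element subsets of its edges. -/
def shadow2 (F : Finset (Finset ℕ)) : Finset (Finset ℕ) :=
  F.biUnion fun f => f.powersetCard 2

/-- Deletion of the first `i` vertices: edges disjoint from `[i] = {1,…,i}`. -/
def del (F : Finset (Finset ℕ)) (i : ℕ) : Finset (Finset ℕ) :=
  F.filter fun e => Disjoint e (Finset.Icc 1 i)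


lemma sort_three (g : Finset ℕ) (h : g.card = 3) :
    ∃ x y z : ℕ, x < y ∧ y < z ∧ g = {x, y, z} ∧ g.sort (· ≤ ·) = [x, y, z] := by
  have hlen : (g.sort (· ≤ ·)).length = 3 := by rw [Finset.length_sort]; exact h
  obtain ⟨x, y, z, hxyz⟩ := List.length_eq_three.mp hlen
  have hsorted := Finset.pairwise_sort g (· ≤ ·)
  have hnodup := Finset.sort_nodup g (· ≤ ·)
  rw [hxyz] at hsorted hnodup
  simp [List.pairwise_cons] at hsorted
  simp at hnodup
  refine ⟨x, y, z, by omega, by omega, ?_, hxyz⟩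
  ext a
  rw [← Finset.mem_sort (· ≤ ·), hxyz]
  simp

lemma card_triple (a b c : ℕ) (h1 : a < b) (h2 : b < c) : ({a, b, c} : Finset ℕ).card = 3 := by
  rw [Finset.card_insert_of_notMem (by simp; omega),
    Finset.card_insert_of_notMem (by simp; omega), Finset.card_singleton]

lemma sort_triple (a b c : ℕ) (h1 : a < b) (h2 : b < c) :
    ({a, b, c} : Finset ℕ).sort (· ≤ ·) = [a, b, c] := by
  obtain ⟨x, y, z, hxy, hyz, heq, hsort⟩ := sort_three {a, b, c} (card_triple a b c h1 h2)
  have hx : x ∈ ({a, b, c} : Finset ℕ) := by rw [heq]; simp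
  have hy : y ∈ ({a, b, c} : Finset ℕ) := by rw [heq]; simp
  have hz : z ∈ ({a, b, c} : Finset ℕ) := by rw [heq]; simp
  have ha : a ∈ ({x, y, z} : Finset ℕ) := by rw [← heq]; simp
  have hb : b ∈ ({x, y, z} : Finset ℕ) := by rw [← heq]; simp
  have hc : c ∈ ({x, y, z} : Finset ℕ) := by rw [← heq]; simp
  simp at hx hy hz ha hb hc
  have : x = a ∧ y = b ∧ z = c := by
    rcases ha with h | h | h <;> rcases hb with h' | h' | h' <;> rcases hc with h'' | h'' | h'' <;> omega
  rw [hsort, this.1, this.2.1, this.2.2]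

lemma precS_triple (a b c : ℕ) (hab : a < b) (hbc : b < c) (g : Finset ℕ) (hg3 : g.card = 3)
    (h0 : ∀ w ∈ g, a ≤ w)
    (h1 : ∃ u ∈ g, ∃ v ∈ g, u < v ∧ b ≤ u ∧ c ≤ v) : PrecS {a, b, c} g := by
  obtain ⟨x, y, z, hxy, hyz, heq, hsort⟩ := sort_three g hg3
  have hcard : ({a, b, c} : Finset ℕ).card = 3 := card_triple a b c hab hbc
  constructor
  · rw [hcard, hg3]
  intro i hi
  rw [hcard] at hi
  rw [sort_triple a b c hab hbc, hsort]
  obtain ⟨u, hu, v, hv, huv, hbu, hcv⟩ := h1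
  rw [heq] at hu hv
  simp at hu hv
  have hax : a ≤ x := h0 x (by rw [heq]; simp)
  have hby : b ≤ y ∧ c ≤ z := by
    rcases hu with h | h | h <;> rcases hv with h' | h' | h' <;> omega
  interval_cases i <;> simp [List.getD] <;> omega

lemma mem_one (n : ℕ) (F : Finset (Finset ℕ)) (hF : ∀ e ∈ F, e ⊆ Finset.Icc 1 n ∧ e.card = 3)
    (hst : IsStable n F) (g : Finset ℕ) (hg : g ∈ F) (b c : ℕ) (h1b : 1 < b) (hbc : b < c)
    (hcn : c ≤ n) (h : ∃ u ∈ g, ∃ v ∈ g, u < v ∧ b ≤ u ∧ c ≤ v) : ({1, b, c} : Finset ℕ) ∈ F := by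
  apply hst _ g ?_ hg
  · exact precS_triple 1 b c h1b hbc g (hF g hg).2
      (fun w hw => (Finset.mem_Icc.mp ((hF g hg).1 hw)).1) h
  · intro x hx
    simp at hx
    rw [Finset.mem_Icc]
    omega

/-- Claim 1 of Case 2 in Lemma 3.5: for distinct e₁, e₂ in the matching
M = {{i+1, 2s+4-i} : 1 ≤ i ≤ s+1}, no triple inside e₁ ∪ e₂ is an edge of F. -/
theorem case2_claim1 (n s : ℕ) (hs : 3 ≤ s) (hn : 2 * s + 3 ≤ n)
    (F : Finset (Finset ℕ))
    (hF : ∀ e ∈ F, e ⊆ Finset.Icc 1 n ∧ e.card = 3)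
    (hst : IsStable n F)
    (hU : HasU F s (2 * s + 1))
    (hnus : matchNum (shadow2 F) = s + 1)
    (hnus1 : matchNum ((shadow2 F).filter fun e => 1 ∉ e) = s + 1) :
    ∀ e₁ ∈ (Finset.Icc 1 (s + 1)).image (fun i => ({i + 1, 2 * s + 4 - i} : Finset ℕ)),
      ∀ e₂ ∈ (Finset.Icc 1 (s + 1)).image (fun i => ({i + 1, 2 * s + 4 - i} : Finset ℕ)),
        e₁ ≠ e₂ → ∀ f : Finset ℕ, f ⊆ e₁ ∪ e₂ → f.card = 3 → f ∉ F := by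
  -- Step 1: extract the matching Q of size s+1 avoiding vertex 1
  set P := ((shadow2 F).filter fun e => 1 ∉ e) with hP
  have hne : (P.powerset.filter fun M => ∀ a ∈ M, ∀ b ∈ M, a ≠ b → Disjoint a b).Nonempty :=
    ⟨∅, by simp⟩
  obtain ⟨Q, hQmem, hQsup⟩ := Finset.exists_mem_eq_sup _ hne Finset.card
  rw [Finset.mem_filter, Finset.mem_powerset] at hQmem
  obtain ⟨hQP, hQdisj⟩ := hQmem
  have hQcard : Q.card = s + 1 := by
    have : matchNum P = Q.card := hQsup
    omega
  -- basic properties of members of Q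
  have hQprop : ∀ q ∈ Q, q.card = 2 ∧ (∀ x ∈ q, 2 ≤ x) ∧ ∃ g ∈ F, q ⊆ g := by
    intro q hq
    have := hQP hq
    rw [hP, Finset.mem_filter] at this
    obtain ⟨hsh, h1q⟩ := this
    rw [shadow2, Finset.mem_biUnion] at hsh
    obtain ⟨g, hgF, hqg⟩ := hsh
    rw [Finset.mem_powersetCard] at hqg
    refine ⟨hqg.2, ?_, g, hgF, hqg.1⟩
    intro x hx
    have hx1 : 1 ≤ x := (Finset.mem_Icc.mp ((hF g hgF).1 (hqg.1 hx))).1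
    have : x ≠ 1 := fun h => h1q (h ▸ hx)
    omega
  -- Step 2: key membership
  have key : ∀ k ∈ Finset.Icc 1 (s + 1), ({1, k + 1, 2 * s + 4 - k} : Finset ℕ) ∈ F := by
    intro k hk
    rw [Finset.mem_Icc] at hk
    set B := Q.filter (fun q => ∀ x ∈ q, k + 1 ≤ x) with hB
    have hBQ : B ⊆ Q := Finset.filter_subset _ _
    -- card (Q \ B) ≤ k - 1
    have hsd : (Q \ B).card ≤ k - 1 := by
      have : (Q \ B).card ≤ (Finset.Icc 2 k).card := by
        apply Finset.card_le_card_of_injOn (fun q => if h : q.Nonempty then q.min' h else 0)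
        · intro q hq
          simp only [Finset.mem_coe] at hq ⊢
          rw [Finset.mem_sdiff] at hq
          obtain ⟨hqQ, hqB⟩ := hq
          obtain ⟨hq2, hqlo, -⟩ := hQprop q hqQ
          have hqne : q.Nonempty := Finset.card_pos.mp (by omega)
          rw [dif_pos hqne]
          rw [Finset.mem_Icc]
          constructor
          · exact hqlo _ (q.min'_mem hqne)
          · rw [hB, Finset.mem_filter] at hqB
            push_neg at hqB
            obtain ⟨x, hxq, hxk⟩ := hqB hqQ
            have := q.min'_le x hxq
            omega
        · intro q1 hq1 q2 hq2 hfeq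
          simp only [Finset.coe_sdiff, Set.mem_diff, Finset.mem_coe] at hq1 hq2
          obtain ⟨hq1Q, -⟩ := hq1
          obtain ⟨hq2Q, -⟩ := hq2
          by_contra hne'
          have h1ne : q1.Nonempty := Finset.card_pos.mp (by have := (hQprop q1 hq1Q).1; omega)
          have h2ne : q2.Nonempty := Finset.card_pos.mp (by have := (hQprop q2 hq2Q).1; omega)
          simp only at hfeq
          rw [dif_pos h1ne, dif_pos h2ne] at hfeq
          have hd := hQdisj q1 hq1Q q2 hq2Q hne'
          exact (Finset.disjoint_left.mp hd (q1.min'_mem h1ne)) (hfeq ▸ q2.min'_mem h2ne)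
      rw [Nat.card_Icc] at this
      omega
    have hBcard : s + 2 - k ≤ B.card := by
      have := Finset.card_sdiff_add_card_eq_card hBQ
      omega
    -- vertices of B
    set V := B.biUnion id with hV
    have hVcard : V.card = 2 * B.card := by
      rw [hV, Finset.card_biUnion]
      · simp only [id]
        rw [Finset.sum_congr rfl (fun q hq => (hQprop q (hBQ hq)).1), Finset.sum_const,
          smul_eq_mul]
        ring
      · intro q1 h1 q2 h2 hne'
        exact hQdisj q1 (hBQ h1) q2 (hBQ h2) hne'
    have hVlo : ∀ v ∈ V, k + 1 ≤ v := by
      intro v hv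
      rw [hV, Finset.mem_biUnion] at hv
      obtain ⟨q, hq, hvq⟩ := hv
      rw [hB, Finset.mem_filter] at hq
      exact hq.2 v hvq
    have hVhi : ∃ v ∈ V, 2 * s + 4 - k ≤ v := by
      by_contra hcon
      push_neg at hcon
      have : V ⊆ Finset.Icc (k + 1) (2 * s + 3 - k) := by
        intro v hv
        rw [Finset.mem_Icc]
        have := hVlo v hv
        have := hcon v hv
        omega
      have := Finset.card_le_card this
      rw [Nat.card_Icc] at this
      omega
    obtain ⟨v, hvV, hvge⟩ := hVhi
    rw [hV, Finset.mem_biUnion] at hvV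
    obtain ⟨q, hqB, hvq⟩ := hvV
    simp only [id] at hvq
    have hqQ := hBQ hqB
    obtain ⟨hq2, hqlo, g, hgF, hqg⟩ := hQprop q hqQ
    rw [hB, Finset.mem_filter] at hqB
    have hqk : ∀ x ∈ q, k + 1 ≤ x := hqB.2
    obtain ⟨a, b, hab, hqab⟩ := Finset.card_eq_two.mp hq2
    -- v is a or b; let u be the other
    have hva : v = a ∨ v = b := by rw [hqab] at hvq; simpa using hvq
    apply mem_one n F hF hst g hgF (k + 1) (2 * s + 4 - k) (by omega) (by omega) (by omega)
    have haq : a ∈ q := by rw [hqab]; simp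
    have hbq : b ∈ q := by rw [hqab]; simp
    have hak := hqk a haq
    have hbk := hqk b hbq
    rcases hva with rfl | rfl
    · rcases Nat.lt_or_ge b v with h | h
      · exact ⟨b, hqg hbq, v, hqg haq, h, by omega, hvge⟩
      · exact ⟨v, hqg haq, b, hqg hbq, by omega, by omega, by omega⟩
    · rcases Nat.lt_or_ge a v with h | h
      · exact ⟨a, hqg haq, v, hqg hbq, h, by omega, hvge⟩
      · exact ⟨v, hqg hbq, a, hqg haq, by omega, by omega, by omega⟩
  -- Step 3: final contradiction
  intro e₁ he₁ e₂ he₂ hne12 f hfsub hfcard hfF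
  obtain ⟨i, hi, rfl⟩ := Finset.mem_image.mp he₁
  obtain ⟨j, hj, rfl⟩ := Finset.mem_image.mp he₂
  rw [Finset.mem_Icc] at hi hj
  have hij : i ≠ j := fun h => hne12 (by rw [h])
  have hfel : ∀ x ∈ f, x = i + 1 ∨ x = 2 * s + 4 - i ∨ x = j + 1 ∨ x = 2 * s + 4 - j := by
    intro x hx
    have := hfsub hx
    simp [Finset.mem_union] at this
    tauto
  have hf2 : ∀ x ∈ f, 2 ≤ x := by
    intro x hx
    rcases hfel x hx with h | h | h | h <;> omega
  set S := (Finset.Icc 1 (s + 1)) \ {i, j} with hS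
  have hSmem : ∀ k ∈ S, 1 ≤ k ∧ k ≤ s + 1 ∧ k ≠ i ∧ k ≠ j := by
    intro k hk
    rw [hS, Finset.mem_sdiff, Finset.mem_Icc] at hk
    simp at hk
    tauto
  have hScard : S.card = s - 1 := by
    rw [hS, Finset.card_sdiff_of_subset]
    · rw [Nat.card_Icc, Finset.card_insert_of_notMem (by simpa using hij),
        Finset.card_singleton]
      omega
    · intro x hx
      simp at hx
      rw [Finset.mem_Icc]
      rcases hx with rfl | rfl <;> omega
  set g : ℕ → Finset ℕ := fun k => ({1, k + 1, 2 * s + 4 - k} : Finset ℕ) with hg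
  have hgF : ∀ k ∈ S, g k ∈ F := by
    intro k hk
    have := hSmem k hk
    exact key k (by rw [Finset.mem_Icc]; omega)
  have hfnotim : f ∉ S.image g := by
    intro hmem
    obtain ⟨k, hk, heq⟩ := Finset.mem_image.mp hmem
    have h1 : (1 : ℕ) ∈ f := by rw [← heq, hg]; simp
    have := hf2 1 h1
    omega
  have hginj : Set.InjOn g S := by
    intro k hk k' hk' heq
    have hk1 := hSmem k hk
    have hk2 := hSmem k' hk'
    have : k + 1 ∈ g k' := by rw [← heq, hg]; simp
    rw [hg] at this
    simp at this
    omega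
  set T := insert f (S.image g) with hT
  have hTcard : T.card = s := by
    rw [hT, Finset.card_insert_of_notMem hfnotim, Finset.card_image_of_injOn hginj, hScard]
    omega
  have hTF : ∀ t ∈ T, t ∈ F := by
    intro t ht
    rw [hT, Finset.mem_insert] at ht
    rcases ht with rfl | ht
    · exact hfF
    · obtain ⟨k, hk, rfl⟩ := Finset.mem_image.mp ht
      exact hgF k hk
  set E := Finset.equivFinOfCardEq hTcard with hE
  set φ : Fin s → Finset ℕ := fun i => (E.symm i : Finset ℕ) with hφdef
  have hφ : ∀ i, φ i ∈ F := fun i => hTF _ (E.symm i).2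
  have hsub : ∀ t ∈ T, t ⊆ Finset.univ.biUnion φ := by
    intro t ht x hx
    rw [Finset.mem_biUnion]
    refine ⟨E ⟨t, ht⟩, Finset.mem_univ _, ?_⟩
    rw [hφdef]
    simpa using hx
  set A := S.image (fun k => k + 1) with hA
  set Bg := S.image (fun k => 2 * s + 4 - k) with hBg
  set X := insert 1 (A ∪ (Bg ∪ f)) with hX
  have hXsub : X ⊆ Finset.univ.biUnion φ := by
    intro x hx
    rw [hX, Finset.mem_insert, Finset.mem_union, Finset.mem_union] at hx
    rcases hx with rfl | hx | hx | hx
    · have hSne : S.Nonempty := Finset.card_pos.mp (by omega)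
      obtain ⟨k, hk⟩ := hSne
      exact hsub (g k) (by rw [hT]; exact Finset.mem_insert_of_mem (Finset.mem_image_of_mem g hk))
        (by rw [hg]; simp)
    · obtain ⟨k, hk, rfl⟩ := Finset.mem_image.mp hx
      exact hsub (g k) (by rw [hT]; exact Finset.mem_insert_of_mem (Finset.mem_image_of_mem g hk))
        (by rw [hg]; simp)
    · obtain ⟨k, hk, rfl⟩ := Finset.mem_image.mp hx
      exact hsub (g k) (by rw [hT]; exact Finset.mem_insert_of_mem (Finset.mem_image_of_mem g hk))
        (by rw [hg]; simp)
    · exact hsub f (by rw [hT]; exact Finset.mem_insert_self _ _) hx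
  have hAcard : A.card = s - 1 := by
    rw [hA, Finset.card_image_of_injOn (fun k _ k' _ h => by exact Nat.succ_injective h), hScard]
  have hBgcard : Bg.card = s - 1 := by
    rw [hBg, Finset.card_image_of_injOn ?_, hScard]
    intro k hk k' hk' h
    have h1 := hSmem k hk
    have h2 := hSmem k' hk'
    have h' : 2 * s + 4 - k = 2 * s + 4 - k' := h
    omega
  have hdBf : Disjoint Bg f := by
    rw [Finset.disjoint_left]
    intro x hxB hxf
    obtain ⟨k, hk, rfl⟩ := Finset.mem_image.mp hxB
    have hkm := hSmem k hk
    rcases hfel _ hxf with h | h | h | h <;> omega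
  have hdA : Disjoint A (Bg ∪ f) := by
    rw [Finset.disjoint_left]
    intro x hxA hxu
    obtain ⟨k, hk, rfl⟩ := Finset.mem_image.mp hxA
    have hkm := hSmem k hk
    rw [Finset.mem_union] at hxu
    rcases hxu with hx | hx
    · obtain ⟨k', hk', heq⟩ := Finset.mem_image.mp hx
      have := hSmem k' hk'
      have heq' : 2 * s + 4 - k' = k + 1 := heq
      omega
    · rcases hfel _ hx with h | h | h | h <;> omega
  have h1not : 1 ∉ A ∪ (Bg ∪ f) := by
    rw [Finset.mem_union, Finset.mem_union]
    rintro (hx | hx | hx)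
    · obtain ⟨k, hk, heq⟩ := Finset.mem_image.mp hx
      have := hSmem k hk
      have heq' : k + 1 = 1 := heq
      omega
    · obtain ⟨k, hk, heq⟩ := Finset.mem_image.mp hx
      have := hSmem k hk
      have heq' : 2 * s + 4 - k = 1 := heq
      omega
    · have := hf2 1 hx
      omega
  have hXcard : X.card = 2 * s + 2 := by
    rw [hX, Finset.card_insert_of_notMem h1not, Finset.card_union_of_disjoint hdA,
      Finset.card_union_of_disjoint hdBf, hAcard, hBgcard, hfcard]
    omega
  have hle := Finset.card_le_card hXsub
  have := hU φ hφ
  omega
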